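/- arXiv:1303.5037 — 4 statements merged into one kernel-verified Lean document; each statement's English description precedes it below -/
import Mathlib

section
/- If X ⊆ ℕ^ℕ is cofinal in the eventual dominance order <*, then there exists m ∈ ℕ such that X is cofinal in the order <^m, where f <^m g means f(n) < g(n) for all n ≥ m. -/
/-- If `X ⊆ ℕ^ℕ` is cofinal in eventual dominance `<*`, then there is an `m` such
that `X` is cofinal in `<^m`, where `f <^m g` means `f n < g n` for all `n ≥ m`. -/
theorem cofinal_eventual_dominance_uniform (X : Set (ℕ → ℕ))
    (hcof : ∀ g : ℕ → ℕ, ∃ f ∈ X, ∃ m : ℕ, ∀ n ≥ m, g n < f n) :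
    ∃ m : ℕ, ∀ g : ℕ → ℕ, ∃ f ∈ X, ∀ n ≥ m, g n < f n := by
  by_contra h
  push_neg at h
  choose g hg using h
  set G : ℕ → ℕ := fun n => Finset.sup (Finset.range (n + 1)) (fun m => g m n) with hG
  obtain ⟨f, hfX, m, hm⟩ := hcof G
  obtain ⟨n, hn, hfn⟩ := hg m f hfX
  exact absurd (hm n hn) (by
    have : g m n ≤ G n := Finset.le_sup (f := fun m => g m n) (Finset.mem_range.mpr (Nat.lt_succ_of_le hn))
    omega)
end

section
/- Every separable unital UHF algebra is simple. -/
/-- A unital C*-algebra is UHF if every finite set of elements can be approximated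
arbitrarily well from a unital C*-subalgebra isomorphic to a full matrix algebra. -/
def IsUHF (A : Type*) [CStarAlgebra A] : Prop :=
  ∀ (s : Finset A) (ε : ℝ), 0 < ε →
    ∃ (B : StarSubalgebra ℂ A) (k : ℕ),
      Nonempty (B ≃⋆ₐ[ℂ] Matrix (Fin k) (Fin k) ℂ) ∧ ∀ x ∈ s, ∃ y ∈ B, ‖x - y‖ < ε

section Aux

variable {A : Type*} [CStarAlgebra A]

/-- If a matrix subalgebra contains a nonzero element of an ideal, the ideal contains 1. -/
lemma uhf_one_mem {I : TwoSidedIdeal A} {B : StarSubalgebra ℂ A} {k : ℕ}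
    (φ : B ≃⋆ₐ[ℂ] Matrix (Fin k) (Fin k) ℂ) {p : A} (hpB : p ∈ B) (hpI : p ∈ I)
    (hp0 : p ≠ 0) : (1 : A) ∈ I := by
  rcases Nat.eq_zero_or_pos k with hk | hk
  · -- the matrix algebra is trivial, so `B` is trivial, contradicting `p ≠ 0`
    subst hk
    exfalso
    apply hp0
    have h0 : φ ⟨p, hpB⟩ = φ 0 := by
      funext i j
      exact i.elim0
    have := φ.injective h0
    simpa [Subtype.ext_iff] using this
  · haveI : Nonempty (Fin k) := Fin.pos_iff_nonempty.mp hk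
    -- transport `I` to a two-sided ideal of the matrix algebra
    let K : TwoSidedIdeal (Matrix (Fin k) (Fin k) ℂ) :=
      TwoSidedIdeal.mk' {m | (φ.symm m : A) ∈ I}
        (by simp only [Set.mem_setOf_eq, map_zero, ZeroMemClass.coe_zero]; exact I.zero_mem)
        (fun {x y} hx hy => by
          simp only [Set.mem_setOf_eq, map_add, AddMemClass.coe_add] at *
          exact I.add_mem hx hy)
        (fun {x} hx => by
          simp only [Set.mem_setOf_eq, map_neg, NegMemClass.coe_neg] at *
          exact I.neg_mem hx)
        (fun {x y} hy => by
          simp only [Set.mem_setOf_eq, map_mul, MulMemClass.coe_mul] at *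
          exact I.mul_mem_left _ _ hy)
        (fun {x y} hx => by
          simp only [Set.mem_setOf_eq, map_mul, MulMemClass.coe_mul] at *
          exact I.mul_mem_right _ _ hx)
    have hmemK : ∀ m, m ∈ K ↔ (φ.symm m : A) ∈ I := fun m =>
      TwoSidedIdeal.mem_mk' _ _ _ _ _ _ m
    have hKne : K ≠ ⊥ := by
      intro hbot
      have h1 : φ ⟨p, hpB⟩ ∈ K := by
        rw [hmemK, φ.symm_apply_apply]
        exact hpI
      rw [hbot, TwoSidedIdeal.mem_bot] at h1
      apply hp0
      have := φ.injective (by rw [h1, map_zero] : φ ⟨p, hpB⟩ = φ 0)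
      simpa [Subtype.ext_iff] using this
    have hKtop : K = ⊤ := (IsSimpleOrder.eq_bot_or_eq_top K).resolve_left hKne
    have h1K : (1 : Matrix (Fin k) (Fin k) ℂ) ∈ K := by
      rw [hKtop]; exact TwoSidedIdeal.mem_top _
    rw [hmemK, map_one] at h1K
    simpa using h1K

/-- Key inequality for selfadjoint elements of a matrix subalgebra:
they are at distance at least their norm from any ideal not containing 1. -/
lemma uhf_dist_selfAdjoint [Nontrivial A] {I : TwoSidedIdeal A} (hI1 : (1 : A) ∉ I)
    {B : StarSubalgebra ℂ A} {k : ℕ} (φ : B ≃⋆ₐ[ℂ] Matrix (Fin k) (Fin k) ℂ)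
    {c : A} (hc : c ∈ B) (hsa : IsSelfAdjoint c) {w : A} (hw : w ∈ I) :
    ‖c‖ ≤ ‖c - w‖ := by
  classical
  rcases eq_or_ne c 0 with rfl | hc0
  · simpa using norm_nonneg (0 - w)
  haveI : IsStarNormal c := hsa.isStarNormal
  -- a spectral value of maximal modulus
  obtain ⟨lam, hlam_mem, hlam⟩ := spectrum.exists_nnnorm_eq_spectralRadius (a := c)
  rw [hsa.spectralRadius_eq_nnnorm] at hlam
  have hlam_norm : ‖lam‖ = ‖c‖ := by
    have := ENNReal.coe_inj.mp hlam
    exact congrArg NNReal.toReal this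
  have hlam0 : lam ≠ 0 := by
    intro h
    apply hc0
    rw [h] at hlam_norm
    simpa using hlam_norm.symm
  -- the spectrum of c is finite, since it embeds in a matrix spectrum
  let cB : B := ⟨c, hc⟩
  have hfin : (spectrum ℂ c).Finite := by
    have h1 : spectrum ℂ c ⊆ spectrum ℂ cB := AlgHom.spectrum_apply_subset B.subtype cB
    have ψ : B ≃ₐ[ℂ] Matrix (Fin k) (Fin k) ℂ :=
      AlgEquiv.ofRingEquiv (f := φ.toRingEquiv) (fun r => by
        rw [Algebra.algebraMap_eq_smul_one, Algebra.algebraMap_eq_smul_one]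
        show φ (r • 1) = r • 1
        rw [map_smul, map_one])
    have h2 : spectrum ℂ cB = spectrum ℂ (ψ cB) := (AlgEquiv.spectrum_eq ψ cB).symm
    exact ((Matrix.finite_spectrum (ψ cB)).subset (h2 ▸ h1))
  -- the spectral projection at lam, via continuous functional calculus
  set f : ℂ → ℂ := fun z => if z = lam then 1 else 0 with hf_def
  have hfc : ContinuousOn f (spectrum ℂ c) := hfin.continuousOn f
  set p : A := cfc f c with hp_def
  -- p belongs to B, since f agrees with a polynomial on the finite spectrum
  have hpB : p ∈ B := by
    set q : Polynomial ℂ := Lagrange.interpolate hfin.toFinset id f with hq_def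
    have heval : ∀ x ∈ spectrum ℂ c, f x = q.eval x := by
      intro x hx
      have := Lagrange.eval_interpolate_at_node (v := id) (r := f)
        (Set.injOn_id _) (hfin.mem_toFinset.mpr hx)
      simpa [hq_def] using this.symm
    have h1 : p = cfc (fun x => q.eval x) c := cfc_congr heval
    rw [h1, cfc_polynomial q c]
    have h2 : Polynomial.aeval c q = ((Polynomial.aeval cB q : B) : A) := by
      simpa using Polynomial.aeval_algHom_apply B.subtype cB q
    rw [h2]
    exact (Polynomial.aeval cB q).2
  -- algebraic properties of p
  have hp2 : p * p = p := by
    rw [hp_def, ← cfc_mul f f c hfc hfc]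
    apply cfc_congr
    intro x _
    by_cases h : x = lam <;> simp [hf_def, h]
  have hpstar : star p = p := by
    rw [hp_def, ← cfc_star f c]
    apply cfc_congr
    intro x _
    by_cases h : x = lam <;> simp [hf_def, h]
  have hp0 : p ≠ 0 := by
    intro h
    have h0 : cfc f c = cfc (fun _ : ℂ => (0 : ℂ)) c := by
      rw [← hp_def, h, cfc_const 0 c]
      simp
    have := eqOn_of_cfc_eq_cfc h0 hfc continuousOn_const
    have := this hlam_mem
    simp [hf_def] at this
  have hcp : c * p = lam • p := by
    have h1 : c * p = cfc (fun x : ℂ => x * f x) c := by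
      rw [cfc_mul _ f c (continuousOn_id' _) hfc, cfc_id' ℂ c, hp_def]
    have h2 : (fun x : ℂ => x * f x) = fun x : ℂ => lam • f x := by
      funext z
      by_cases h : z = lam <;> simp [hf_def, h]
    rw [h1, h2, cfc_smul lam f c hfc, hp_def]
  have hpnorm : ‖p‖ ≤ 1 := by
    have h1 : ‖star p * p‖ = ‖p‖ * ‖p‖ := CStarRing.norm_star_mul_self
    rw [hpstar, hp2] at h1
    nlinarith [norm_nonneg p]
  -- the main estimate
  by_contra hlt
  push_neg at hlt
  rw [← hlam_norm] at hlt
  -- ‖lam • p - p * w * p‖ < ‖lam‖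
  have hpcw : p * (c - w) * p = lam • p - p * w * p := by
    have h1 : p * (c - w) * p = p * (c * p) - p * w * p := by
      noncomm_ring
    rw [h1, hcp, mul_smul_comm, hp2]
  have hkey : ‖lam • p - p * w * p‖ < ‖lam‖ := by
    calc ‖lam • p - p * w * p‖ = ‖p * (c - w) * p‖ := by rw [hpcw]
      _ ≤ ‖p * (c - w)‖ * ‖p‖ := norm_mul_le _ _
      _ ≤ ‖p‖ * ‖c - w‖ * ‖p‖ := by
          have := norm_mul_le p (c - w)
          have hn := norm_nonneg p
          nlinarith [norm_nonneg (c - w)]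
      _ ≤ ‖c - w‖ := by
          nlinarith [mul_le_mul hpnorm hpnorm (norm_nonneg p) zero_le_one,
            norm_nonneg (c - w), norm_nonneg p]
      _ < ‖lam‖ := hlt
  -- hence p is in I, a contradiction
  set t : A := p - lam⁻¹ • (p * w * p) with ht_def
  have ht : ‖t‖ < 1 := by
    have h1 : t = lam⁻¹ • (lam • p - p * w * p) := by
      rw [smul_sub, smul_smul, inv_mul_cancel₀ hlam0, one_smul]
    rw [h1, norm_smul, norm_inv]
    rw [inv_mul_lt_iff₀ (norm_pos_iff.mpr hlam0), mul_one]
    exact hkey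
  let u : Aˣ := Units.oneSub t ht
  have hpu : p * (u : A) = lam⁻¹ • (p * w * p) := by
    have huval : (u : A) = 1 - t := rfl
    rw [huval, ht_def, mul_sub, mul_one, mul_sub, mul_smul_comm,
      ← mul_assoc, ← mul_assoc, hp2]
    abel
  have hpwpI : lam⁻¹ • (p * w * p) ∈ I := by
    rw [Algebra.smul_def]
    exact I.mul_mem_left _ _ (I.mul_mem_right _ _ (I.mul_mem_left _ _ hw))
  have hpI : p ∈ I := by
    have h1 : p = p * (u : A) * ((u⁻¹ : Aˣ) : A) := by
      rw [mul_assoc, u.mul_inv, mul_one]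
    rw [h1, hpu]
    exact I.mul_mem_right _ _ hpwpI
  exact hI1 (uhf_one_mem φ hpB hpI hp0)

/-- General version: elements of a matrix subalgebra are at distance at least
their norm from an ideal not containing 1. -/
lemma uhf_dist [Nontrivial A] {I : TwoSidedIdeal A} (hI1 : (1 : A) ∉ I)
    {B : StarSubalgebra ℂ A} {k : ℕ} (φ : B ≃⋆ₐ[ℂ] Matrix (Fin k) (Fin k) ℂ)
    {b : A} (hb : b ∈ B) {z : A} (hz : z ∈ I) :
    ‖b‖ ≤ ‖b - z‖ := by
  rcases eq_or_ne b 0 with rfl | hb0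
  · simpa using norm_nonneg (0 - z)
  have hcB : star b * b ∈ B := mul_mem (star_mem hb) hb
  have hsa : IsSelfAdjoint (star b * b) := IsSelfAdjoint.star_mul_self b
  have hwI : star b * z ∈ I := I.mul_mem_left _ _ hz
  have hkey := uhf_dist_selfAdjoint hI1 φ hcB hsa hwI
  have h1 : star b * b - star b * z = star b * (b - z) := by rw [mul_sub]
  have h2 : ‖star b * b - star b * z‖ ≤ ‖b‖ * ‖b - z‖ := by
    rw [h1]
    calc ‖star b * (b - z)‖ ≤ ‖star b‖ * ‖b - z‖ := norm_mul_le _ _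
      _ = ‖b‖ * ‖b - z‖ := by rw [norm_star]
  have h3 : ‖star b * b‖ = ‖b‖ * ‖b‖ := CStarRing.norm_star_mul_self
  have hb0' : (0:ℝ) < ‖b‖ := norm_pos_iff.mpr hb0
  nlinarith [hkey, h2, h3]

end Aux

/-- Every separable unital UHF algebra is simple: it has no nontrivial closed
two-sided ideals. -/
theorem uhf_simple (A : Type*) [CStarAlgebra A] [Nontrivial A]
    [TopologicalSpace.SeparableSpace A] (hA : IsUHF A)
    (I : TwoSidedIdeal A) (hI : IsClosed (I : Set A)) :
    I = ⊥ ∨ I = ⊤ := by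
  by_cases h1 : (1 : A) ∈ I
  · exact Or.inr (I.eq_top h1)
  · left
    refine SetLike.ext fun x => ?_
    rw [TwoSidedIdeal.mem_bot]
    constructor
    · intro hx
      by_contra hx0
      have hxpos : (0:ℝ) < ‖x‖ := norm_pos_iff.mpr hx0
      obtain ⟨B, k, ⟨φ⟩, happ⟩ := hA {x} (‖x‖ / 2) (by positivity)
      obtain ⟨y, hyB, hxy⟩ := happ x (Finset.mem_singleton_self x)
      have hkey : ‖y‖ ≤ ‖y - x‖ := uhf_dist h1 φ hyB hx
      have h2 : ‖y - x‖ = ‖x - y‖ := norm_sub_rev _ _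
      have h3 : ‖x‖ ≤ ‖x - y‖ + ‖y‖ := by
        calc ‖x‖ = ‖(x - y) + y‖ := by rw [sub_add_cancel]
          _ ≤ ‖x - y‖ + ‖y‖ := norm_add_le _ _
      linarith
    · rintro rfl
      exact I.zero_mem
end

section
/- There is a universal constant K (one may take the argument to yield K in terms of the finite-dimensional constant K_{FD}) such that: for any finite-dimensional C*-algebra A, any AF algebra B, and any map ρ : A → B with defect δ < 10^{-6}, there exists a *-homomorphism φ : A → B with ‖ρ − φ‖ ≤ K δ, assuming that every Borel-measurable map between finite-dimensional C*-algebras with defect δ' < 1/1000 is within K_{FD} δ' of a *-homomorphism. -/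
open Metric

lemma measurable_listFindIdx {α β : Type*} [MeasurableSpace α] (l : List β)
    (p : α → β → Bool) (hp : ∀ b, MeasurableSet {a | p a b = true}) :
    Measurable fun a => l.findIdx (p a) := by
  induction l with
  | nil => simp only [List.findIdx_nil]; exact measurable_const
  | cons x xs ih =>
    simp only [List.findIdx_cons, Bool.cond_eq_ite]
    exact Measurable.ite (hp x) measurable_const (ih.add measurable_const)

/-- `DefectLE ρ δ` says that the defect of the map `ρ` (a measure of its failure to be
a *-homomorphism) is at most `δ`. -/
def DefectLE {A B : Type*} [NonUnitalCStarAlgebra A] [NonUnitalCStarAlgebra B]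
    (ρ : A → B) (δ : ℝ) : Prop :=
  ∀ a b : A, ‖a‖ ≤ 1 → ‖b‖ ≤ 1 → ∀ t : ℂ, ‖t‖ ≤ 1 →
    ‖ρ (a * b) - ρ a * ρ b‖ ≤ δ ∧ ‖ρ (a + b) - (ρ a + ρ b)‖ ≤ δ ∧
    ‖ρ (star a) - star (ρ a)‖ ≤ δ ∧ ‖ρ (t • a) - t • ρ a‖ ≤ δ ∧ |‖a‖ - ‖ρ a‖| ≤ δ

/-- An AF algebra: every finite set of elements can be approximated arbitrarily well
from a finite-dimensional C*-subalgebra. -/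
def IsAF (B : Type*) [NonUnitalCStarAlgebra B] : Prop :=
  ∀ (s : Finset B) (ε : ℝ), 0 < ε →
    ∃ C : NonUnitalStarSubalgebra ℂ B, FiniteDimensional ℂ C ∧
      ∀ x ∈ s, ∃ y ∈ C, ‖x - y‖ < ε

section ZeroDefect

variable {A B : Type*} [NonUnitalCStarAlgebra A] [NonUnitalCStarAlgebra B]

lemma exists_hom_of_defect_zero {ρ : A → B} (h : DefectLE ρ 0) :
    ∃ φ : A →⋆ₙₐ[ℂ] B, ∀ a : A, ‖a‖ ≤ 1 → ρ a = φ a := by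
  have hsm : ∀ (x : A) (t : ℂ), ‖x‖ ≤ 1 → ‖t‖ ≤ 1 → ρ (t • x) = t • ρ x := by
    intro x t hx ht
    have := (h x x hx hx t ht).2.2.2.1
    rwa [norm_le_zero_iff, sub_eq_zero] at this
  have hadd : ∀ x y : A, ‖x‖ ≤ 1 → ‖y‖ ≤ 1 → ρ (x + y) = ρ x + ρ y := by
    intro x y hx hy
    have := (h x y hx hy 0 (by simp)).2.1
    rwa [norm_le_zero_iff, sub_eq_zero] at this
  have hmul : ∀ x y : A, ‖x‖ ≤ 1 → ‖y‖ ≤ 1 → ρ (x * y) = ρ x * ρ y := by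
    intro x y hx hy
    have := (h x y hx hy 0 (by simp)).1
    rwa [norm_le_zero_iff, sub_eq_zero] at this
  have hst : ∀ x : A, ‖x‖ ≤ 1 → ρ (star x) = star (ρ x) := by
    intro x hx
    have := (h x x hx hx 0 (by simp)).2.2.1
    rwa [norm_le_zero_iff, sub_eq_zero] at this
  have hzero : ρ 0 = 0 := by
    have := hadd 0 0 (by simp) (by simp)
    rw [add_zero] at this
    exact (left_eq_add.mp this)
  -- well-definedness / scaling step
  have hnorm_inv_smul : ∀ (a : A) (r : ℝ), ‖a‖ ≤ r → 0 < r → ‖((r:ℂ))⁻¹ • a‖ ≤ 1 := by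
    intro a r har hr
    rw [norm_smul, norm_inv, Complex.norm_real, Real.norm_eq_abs, abs_of_pos hr]
    rw [inv_mul_le_one₀ hr]
    exact har
  have step : ∀ (a : A) (r r' : ℝ), 0 < r → r ≤ r' → ‖a‖ ≤ r →
      ((r':ℝ):ℂ) • ρ (((r':ℝ):ℂ)⁻¹ • a) = ((r:ℝ):ℂ) • ρ (((r:ℝ):ℂ)⁻¹ • a) := by
    intro a r r' hr hrr' har
    have hr' : (0:ℝ) < r' := lt_of_lt_of_le hr hrr'
    have key : ((r':ℝ):ℂ)⁻¹ • a = (((r/r' : ℝ)):ℂ) • (((r:ℝ):ℂ)⁻¹ • a) := by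
      rw [smul_smul]
      congr 1
      have hrC : ((r:ℝ):ℂ) ≠ 0 := by exact_mod_cast hr.ne'
      have hr'C : ((r':ℝ):ℂ) ≠ 0 := by exact_mod_cast hr'.ne'
      push_cast
      field_simp
    have hrC : ((r:ℝ):ℂ) ≠ 0 := by exact_mod_cast hr.ne'
    have hr'C : ((r':ℝ):ℂ) ≠ 0 := by exact_mod_cast hr'.ne'
    rw [key, hsm _ _ (hnorm_inv_smul a r har hr)
      (by rw [Complex.norm_real, Real.norm_eq_abs, abs_of_pos (div_pos hr hr')]
          exact div_le_one_of_le₀ hrr' hr'.le),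
      smul_smul]
    congr 1
    rw [Complex.ofReal_div, mul_div_assoc']
    rw [mul_comm, mul_div_assoc, div_self hr'C, mul_one]
  have wellDef : ∀ (a : A) (r : ℝ), ‖a‖ ≤ r → 0 < r →
      ((r:ℝ):ℂ) • ρ (((r:ℝ):ℂ)⁻¹ • a) = ((‖a‖+1 : ℝ):ℂ) • ρ (((‖a‖+1 : ℝ):ℂ)⁻¹ • a) := by
    intro a r har hr
    have hs : (0:ℝ) < ‖a‖ + 1 := by positivity
    rcases le_total r (‖a‖+1) with hle | hle
    · exact (step a r (‖a‖+1) hr hle har).symm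
    · exact step a (‖a‖+1) r hs hle (by linarith)
  set g : A → B := fun a => ((‖a‖+1 : ℝ):ℂ) • ρ (((‖a‖+1 : ℝ):ℂ)⁻¹ • a) with hg
  have gr : ∀ (a : A) (r : ℝ), ‖a‖ ≤ r → 0 < r →
      g a = ((r:ℝ):ℂ) • ρ (((r:ℝ):ℂ)⁻¹ • a) := fun a r har hr => (wellDef a r har hr).symm
  have gadd : ∀ x y : A, g (x + y) = g x + g y := by
    intro x y
    have h0x := norm_nonneg x; have h0y := norm_nonneg y
    set r : ℝ := ‖x‖ + ‖y‖ + 1 with hrdef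
    have hr : (0:ℝ) < r := by positivity
    have hx : ‖x‖ ≤ r := by simp only [hrdef]; linarith
    have hy : ‖y‖ ≤ r := by simp only [hrdef]; linarith
    have hxy : ‖x + y‖ ≤ r := le_trans (norm_add_le x y) (by simp only [hrdef]; linarith)
    rw [gr (x+y) r hxy hr, gr x r hx hr, gr y r hy hr, smul_add,
      hadd _ _ (hnorm_inv_smul x r hx hr) (hnorm_inv_smul y r hy hr), smul_add]
  have gsmul : ∀ (t : ℂ) (x : A), g (t • x) = t • g x := by
    intro t x
    have h0x := norm_nonneg x; have h0t := norm_nonneg t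
    set s : ℝ := ‖x‖ + 1 with hsdef
    have hs : (0:ℝ) < s := by positivity
    set r : ℝ := (‖t‖ + 1) * s with hrdef
    have hr : (0:ℝ) < r := by positivity
    have hsC : ((s:ℝ):ℂ) ≠ 0 := by exact_mod_cast hs.ne'
    have hrC : ((r:ℝ):ℂ) ≠ 0 := by exact_mod_cast hr.ne'
    have htx : ‖t • x‖ ≤ r := by
      rw [norm_smul, hrdef, hsdef]; nlinarith
    have hxs : ‖x‖ ≤ s := by simp only [hsdef]; linarith
    rw [gr (t • x) r htx hr, gr x s hxs hs]
    have key : ((r:ℝ):ℂ)⁻¹ • (t • x) = (t * ((s/r : ℝ):ℂ)) • (((s:ℝ):ℂ)⁻¹ • x) := by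
      rw [smul_smul, smul_smul]
      congr 1
      push_cast
      field_simp
    have hnt : ‖t * ((s/r : ℝ):ℂ)‖ ≤ 1 := by
      rw [norm_mul, Complex.norm_real, Real.norm_eq_abs, abs_of_pos (div_pos hs hr)]
      have hre : ‖t‖ * (s / r) = (‖t‖ * s) / r := by ring
      rw [hre, div_le_one hr, hrdef]
      nlinarith
    rw [key, hsm _ _ (hnorm_inv_smul x s hxs hs) hnt, smul_smul, smul_smul]
    congr 1
    push_cast
    field_simp
    try ring
  have gmul : ∀ x y : A, g (x * y) = g x * g y := by
    intro x y
    have h0x := norm_nonneg x; have h0y := norm_nonneg y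
    set r : ℝ := ‖x‖ + ‖y‖ + 1 with hrdef
    have hr : (0:ℝ) < r := by positivity
    have hrC : ((r:ℝ):ℂ) ≠ 0 := by exact_mod_cast hr.ne'
    have hx : ‖x‖ ≤ r := by simp only [hrdef]; linarith
    have hy : ‖y‖ ≤ r := by simp only [hrdef]; linarith
    have hxy : ‖x * y‖ ≤ r * r := le_trans (norm_mul_le x y) (by nlinarith)
    rw [gr (x*y) (r*r) hxy (by positivity), gr x r hx hr, gr y r hy hr]
    have key : (((r*r : ℝ)):ℂ)⁻¹ • (x * y) = ((((r:ℝ):ℂ))⁻¹ • x) * ((((r:ℝ):ℂ))⁻¹ • y) := by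
      rw [smul_mul_smul_comm]
      congr 1
      push_cast
      rw [mul_inv]
    rw [key, hmul _ _ (hnorm_inv_smul x r hx hr) (hnorm_inv_smul y r hy hr),
      smul_mul_smul_comm]
    congr 1
    push_cast
    ring
  have gstar : ∀ x : A, g (star x) = star (g x) := by
    intro x
    have h0x := norm_nonneg x
    set r : ℝ := ‖x‖ + 1 with hrdef
    have hr : (0:ℝ) < r := by positivity
    have hx : ‖x‖ ≤ r := by simp only [hrdef]; linarith
    have hsx : ‖star x‖ ≤ r := by rw [norm_star]; exact hx
    rw [gr (star x) r hsx hr, gr x r hx hr]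
    have key : (((r:ℝ)):ℂ)⁻¹ • (star x) = star ((((r:ℝ):ℂ))⁻¹ • x) := by
      rw [star_smul]
      congr 1
      rw [star_inv₀, Complex.star_def, Complex.conj_ofReal]
    rw [key, hst _ (hnorm_inv_smul x r hx hr), star_smul]
    congr 1
    rw [Complex.star_def, Complex.conj_ofReal]
  have g0 : g 0 = 0 := by
    rw [gr 0 1 (by simp) one_pos, smul_zero, hzero, smul_zero]
  have geq : ∀ a : A, ‖a‖ ≤ 1 → g a = ρ a := by
    intro a ha
    rw [gr a 1 ha one_pos]
    norm_num
  refine ⟨{ toFun := g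
            map_smul' := (fun t x => gsmul t x)
            map_zero' := g0
            map_add' := gadd
            map_mul' := gmul
            map_star' := gstar }, fun a ha => ?_⟩
  exact (geq a ha).symm

end ZeroDefect

set_option maxHeartbeats 1600000 in
/-- Assuming Farah's finite-dimensional stability theorem (any Borel-measurable map
between finite-dimensional C*-algebras with defect `δ' < 1/1000` is uniformly within
`K_FD δ'` of a *-homomorphism), there is a universal constant `K` such that every map
from a finite-dimensional C*-algebra into an AF algebra with defect `δ < 10⁻⁶` is
uniformly within `K δ` of a *-homomorphism. -/
theorem defect_small_implies_close_to_hom_AF (K_FD : ℝ)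
    (hFD : ∀ (A B : Type) [CStarAlgebra A] [FiniteDimensional ℂ A]
      [CStarAlgebra B] [FiniteDimensional ℂ B]
      [MeasurableSpace A] [BorelSpace A] [MeasurableSpace B] [BorelSpace B]
      (ρ : A → B) (δ : ℝ), Measurable ρ → DefectLE ρ δ → δ < 1 / 1000 →
      ∃ φ : A →⋆ₙₐ[ℂ] B, ∀ a : A, ‖a‖ ≤ 1 → ‖ρ a - φ a‖ ≤ K_FD * δ) :
    ∃ K : ℝ, ∀ (A B : Type) [CStarAlgebra A] [FiniteDimensional ℂ A]
      [NonUnitalCStarAlgebra B], IsAF B →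
      ∀ (ρ : A → B) (δ : ℝ), DefectLE ρ δ → δ < 1 / 1000000 →
        ∃ φ : A →⋆ₙₐ[ℂ] B, ∀ a : A, ‖a‖ ≤ 1 → ‖ρ a - φ a‖ ≤ K * δ := by
  classical
  -- First, `K_FD` is nonnegative.
  have hKFD : 0 ≤ K_FD := by
    borelize ℂ
    obtain ⟨φ, hφ⟩ := hFD ℂ ℂ id (1/2000) measurable_id
      (by intro a b ha hb t ht; simp) (by norm_num)
    have h0 := hφ 0 (by simp)
    simp only [id_eq, map_zero, sub_zero, norm_zero] at h0
    linarith
  refine ⟨58 * K_FD + 10, ?_⟩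
  intro A B _ _ _ hAF ρ δ hδ hδ6
  have hδ0 : 0 ≤ δ := le_trans (norm_nonneg _) ((hδ 0 0 (by simp) (by simp) 0 (by simp)).1)
  -- the zero-defect case
  rcases hδ0.eq_or_lt with h0 | hδpos
  · obtain ⟨φ, hφ⟩ := exists_hom_of_defect_zero (h0 ▸ hδ)
    refine ⟨φ, fun a ha => ?_⟩
    rw [hφ a ha, sub_self, norm_zero, ← h0, mul_zero]
  -- basic consequences of the defect bound
  have hρnorm : ∀ u : A, ‖u‖ ≤ 1 → ‖ρ u‖ ≤ ‖u‖ + δ := by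
    intro u hu
    have := (hδ u u hu hu 0 (by simp)).2.2.2.2
    rw [abs_le] at this
    linarith [this.1]
  have hρlip : ∀ u v : A, ‖u‖ ≤ 1 → ‖v‖ ≤ 1 → ‖u - v‖ ≤ 1 →
      ‖ρ u - ρ v‖ ≤ ‖u - v‖ + 2*δ := by
    intro u v hu hv huv
    have h1 := (hδ v (u - v) hv huv 0 (by simp)).2.1
    rw [add_sub_cancel] at h1
    have h2 : ‖ρ (u - v)‖ ≤ ‖u - v‖ + δ := hρnorm _ huv
    calc ‖ρ u - ρ v‖ = ‖(ρ u - (ρ v + ρ (u - v))) + ρ (u - v)‖ := by congr 1; abel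
      _ ≤ ‖ρ u - (ρ v + ρ (u - v))‖ + ‖ρ (u - v)‖ := norm_add_le _ _
      _ ≤ δ + (‖u - v‖ + δ) := add_le_add h1 h2
      _ = ‖u - v‖ + 2*δ := by ring
  -- the case where `δ` is large compared to `1/K_FD`
  by_cases hbig : 1 ≤ 29 * K_FD * δ
  · refine ⟨0, fun a ha => ?_⟩
    have h1 : ‖ρ a‖ ≤ ‖a‖ + δ := hρnorm a ha
    have h2 : (0 : A →⋆ₙₐ[ℂ] B) a = 0 := rfl
    rw [h2, sub_zero]
    nlinarith
  push_neg at hbig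
  -- construct a finite δ-net of the unit ball of A
  obtain ⟨t, hts, htf, htc⟩ :=
    finite_cover_balls_of_compact (isCompact_closedBall (0:A) 1) hδpos
  set l : List A := htf.toFinset.toList with hl
  have hlmem : ∀ x, x ∈ l ↔ x ∈ t := by
    intro x; rw [hl, Finset.mem_toList, Set.Finite.mem_toFinset]
  -- get the finite-dimensional subalgebra
  obtain ⟨C, hCfd, hCapp⟩ := hAF (l.map ρ).toFinset δ hδpos
  haveI : FiniteDimensional ℂ C := hCfd
  haveI : IsClosed (C : Set B) := C.toSubmodule.closed_of_finiteDimensional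
  haveI : FiniteDimensional ℂ (Unitization ℂ C) :=
    Module.Finite.equiv
      (({ Unitization.addEquiv ℂ C with map_smul' := fun _ _ => rfl } :
        Unitization ℂ C ≃ₗ[ℂ] ℂ × C)).symm
  set nth : ℕ → A := fun j => l.getD j 0 with hnth
  have hnth_eq : ∀ (j : ℕ) (h : j < l.length), nth j = l[j] := by
    intro j h
    rw [hnth]
    simp [List.getD_eq_getElem?_getD, List.getElem?_eq_getElem h]
  have hnth_mem : ∀ j, j < l.length → nth j ∈ t := by
    intro j hj
    rw [hnth_eq _ hj]
    exact (hlmem _).mp (List.getElem_mem hj)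
  have hnth_norm : ∀ j, j < l.length → ‖nth j‖ ≤ 1 := by
    intro j hj
    have := hts (hnth_mem j hj)
    rwa [mem_closedBall, dist_zero_right] at this
  -- choose approximants in C for the values of ρ on the net
  have hw' : ∀ j : ℕ, ∃ y : C, j < l.length → ‖ρ (nth j) - (y : B)‖ < δ := by
    intro j
    by_cases hj : j < l.length
    · have hmem : ρ (nth j) ∈ (l.map ρ).toFinset := by
        rw [List.mem_toFinset, List.mem_map]
        refine ⟨nth j, ?_, rfl⟩
        rw [hnth_eq _ hj]
        exact List.getElem_mem hj
      obtain ⟨y, hyC, hy⟩ := hCapp _ hmem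
      exact ⟨⟨y, hyC⟩, fun _ => hy⟩
    · exact ⟨0, fun h => absurd h hj⟩
  choose w hw using hw'
  -- the measurable selection of nearest net point
  set p : A → A → Bool := fun a y => decide (‖(2:ℂ)⁻¹ • a - y‖ < δ) with hp
  set idx : A → ℕ := fun a => l.findIdx (p a) with hidxdef
  have half_norm : ∀ a : A, ‖(2:ℂ)⁻¹ • a‖ = ‖a‖ / 2 := by
    intro a
    rw [norm_smul, norm_inv]
    simp
    ring
  have hidx : ∀ a : A, ‖a‖ ≤ 2 →
      idx a < l.length ∧ ‖(2:ℂ)⁻¹ • a - nth (idx a)‖ < δ := by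
    intro a ha
    have hx : (2:ℂ)⁻¹ • a ∈ closedBall (0:A) 1 := by
      rw [mem_closedBall, dist_zero_right, half_norm]
      linarith
    obtain ⟨y, hyt, hy⟩ := Set.mem_iUnion₂.mp (htc hx)
    rw [mem_ball, dist_eq_norm] at hy
    have hex : ∃ z ∈ l, p a z = true := ⟨y, (hlmem y).mpr hyt, by rw [hp]; simpa using hy⟩
    have hlt : idx a < l.length := by
      rw [hidxdef]
      exact List.findIdx_lt_length_of_exists hex
    refine ⟨hlt, ?_⟩
    have := List.findIdx_getElem (p := p a) (xs := l) (w := hlt)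
    simp only [hp, decide_eq_true_eq] at this
    rw [hnth_eq _ hlt]
    exact this
  -- the discretized map into C
  set ρ₂ : A → C := fun a => if ‖a‖ ≤ 2 then (2:ℂ) • w (idx a) else 0 with hρ₂
  have hclose : ∀ a : A, ‖a‖ ≤ 2 → ‖(ρ₂ a : B) - ρ a‖ ≤ 9*δ := by
    intro a ha
    have hj := hidx a ha
    set x : A := (2:ℂ)⁻¹ • a with hx
    have hx1 : ‖x‖ ≤ 1 := by rw [hx, half_norm]; linarith
    have hy1 : ‖nth (idx a)‖ ≤ 1 := hnth_norm _ hj.1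
    have hwj : ‖ρ (nth (idx a)) - (w (idx a) : B)‖ < δ := hw _ hj.1
    have hlipj : ‖ρ (nth (idx a)) - ρ x‖ ≤ ‖nth (idx a) - x‖ + 2*δ := by
      refine hρlip _ _ hy1 hx1 ?_
      rw [← norm_neg, neg_sub]
      exact hj.2.le.trans (by linarith)
    have hxy : ‖nth (idx a) - x‖ < δ := by rw [← norm_neg, neg_sub]; exact hj.2
    have hwx : ‖(w (idx a) : B) - ρ x‖ ≤ 4*δ := by
      calc ‖(w (idx a) : B) - ρ x‖
          = ‖-(ρ (nth (idx a)) - (w (idx a) : B)) + (ρ (nth (idx a)) - ρ x)‖ := by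
            congr 1; abel
        _ ≤ ‖-(ρ (nth (idx a)) - (w (idx a) : B))‖ + ‖ρ (nth (idx a)) - ρ x‖ :=
            norm_add_le _ _
        _ = ‖ρ (nth (idx a)) - (w (idx a) : B)‖ + ‖ρ (nth (idx a)) - ρ x‖ := by
            rw [norm_neg]
        _ ≤ δ + (‖nth (idx a) - x‖ + 2*δ) := add_le_add hwj.le hlipj
        _ ≤ δ + (δ + 2*δ) := by linarith
        _ = 4*δ := by ring
    have hdouble : ‖ρ a - (ρ x + ρ x)‖ ≤ δ := by
      have := (hδ x x hx1 hx1 0 (by simp)).2.1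
      have hxx : x + x = a := by
        rw [hx, ← two_smul ℂ, smul_smul]
        norm_num
      rwa [hxx] at this
    have hρ₂a : (ρ₂ a : B) = (2:ℂ) • (w (idx a) : B) := by
      rw [hρ₂]
      simp only [ha, if_true]
      rfl
    calc ‖(ρ₂ a : B) - ρ a‖
        = ‖(2:ℂ) • ((w (idx a) : B) - ρ x) + -(ρ a - (ρ x + ρ x))‖ := by
          rw [hρ₂a]; congr 1
          rw [smul_sub]
          rw [show ((2:ℂ) • ρ x : B) = ρ x + ρ x from two_smul ℂ (ρ x)]
          abel
      _ ≤ ‖(2:ℂ) • ((w (idx a) : B) - ρ x)‖ + ‖-(ρ a - (ρ x + ρ x))‖ := norm_add_le _ _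
      _ = 2 * ‖(w (idx a) : B) - ρ x‖ + ‖ρ a - (ρ x + ρ x)‖ := by
          rw [norm_smul, norm_neg]; norm_num
      _ ≤ 2 * (4*δ) + δ := by
          have := hwx
          have h2 : (0:ℝ) ≤ 2 := by norm_num
          nlinarith
      _ = 9*δ := by ring
  have hρ₂normB : ∀ u : A, ‖u‖ ≤ 1 → ‖(ρ₂ u : B)‖ ≤ 1 + 10*δ := by
    intro u hu
    have h1 := hclose u (by linarith)
    have h2 := hρnorm u hu
    calc ‖(ρ₂ u : B)‖ = ‖((ρ₂ u : B) - ρ u) + ρ u‖ := by congr 1; abel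
      _ ≤ ‖(ρ₂ u : B) - ρ u‖ + ‖ρ u‖ := norm_add_le _ _
      _ ≤ 9*δ + (‖u‖ + δ) := add_le_add h1 h2
      _ ≤ 1 + 10*δ := by linarith
  borelize A
  letI : MeasurableSpace C := borel _
  haveI : BorelSpace C := ⟨rfl⟩
  letI : MeasurableSpace (Unitization ℂ C) := borel _
  haveI : BorelSpace (Unitization ℂ C) := ⟨rfl⟩
  set F := Unitization.inrNonUnitalStarAlgHom ℂ C with hF
  have hFapp : ∀ z : C, F z = (z : Unitization ℂ C) := fun _ => rfl
  set ρ₃ : A → Unitization ℂ C := fun a => F (ρ₂ a) with hρ₃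
  have hmeasρ₃ : Measurable ρ₃ := by
    have hmidx : Measurable idx := by
      show Measurable (fun a : A => l.findIdx (p a))
      apply measurable_listFindIdx
      intro b
      have hset : {a : A | p a b = true} = {a : A | ‖(2:ℂ)⁻¹ • a - b‖ < δ} := by
        ext a; simp [hp]
      rw [hset]
      exact (isOpen_lt (Continuous.norm ((continuous_const_smul _).sub continuous_const))
        continuous_const).measurableSet
    have hm2 : Measurable ρ₂ := by
      show Measurable (fun a : A => if ‖a‖ ≤ 2 then ((2:ℂ) • w (idx a) : C) else 0)
      refine Measurable.ite ?_ ?_ measurable_const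
      · exact (isClosed_le continuous_norm continuous_const).measurableSet
      · exact (measurable_from_top (f := fun j : ℕ => ((2:ℂ) • w j : C))).comp hmidx
    exact (Unitization.isometry_inr (𝕜 := ℂ) (A := C)).continuous.measurable.comp hm2
  have hdefect : DefectLE ρ₃ (29*δ) := by
    intro a b ha hb c hc
    have h0a := norm_nonneg a; have h0b := norm_nonneg b; have h0c := norm_nonneg c
    have hab2 : ‖a*b‖ ≤ 2 :=
      le_trans (norm_mul_le a b) (by nlinarith)
    have hsum2 : ‖a+b‖ ≤ 2 := le_trans (norm_add_le a b) (by linarith)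
    have hsa2 : ‖star a‖ ≤ 2 := by rw [norm_star]; linarith
    have hca2 : ‖c • a‖ ≤ 2 := by rw [norm_smul]; nlinarith
    have qa := hclose a (by linarith)
    have qb := hclose b (by linarith)
    have qab := hclose _ hab2
    have qsum := hclose _ hsum2
    have qsa := hclose _ hsa2
    have qca := hclose _ hca2
    have hρa1 : ‖ρ a‖ ≤ 1 + δ := le_trans (hρnorm a ha) (by linarith)
    have hρ₂b1 := hρ₂normB b hb
    obtain ⟨d1, d2, d3, d4, d5⟩ := hδ a b ha hb c hc
    refine ⟨?_, ?_, ?_, ?_, ?_⟩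
    · show ‖F (ρ₂ (a*b)) - F (ρ₂ a) * F (ρ₂ b)‖ ≤ 29*δ
      rw [← map_mul, ← map_sub, hFapp, Unitization.norm_inr]
      show ‖((ρ₂ (a*b) - ρ₂ a * ρ₂ b : C) : B)‖ ≤ 29*δ
      have hcoe : ((ρ₂ (a*b) - ρ₂ a * ρ₂ b : C) : B)
          = (ρ₂ (a*b) : B) - (ρ₂ a : B) * (ρ₂ b : B) := rfl
      rw [hcoe]
      have dec : (ρ₂ (a*b) : B) - (ρ₂ a : B) * (ρ₂ b : B)
          = (((ρ₂ (a*b) : B) - ρ (a*b)) + (ρ (a*b) - ρ a * ρ b)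
            + ρ a * (ρ b - (ρ₂ b : B))) + (ρ a - (ρ₂ a : B)) * (ρ₂ b : B) := by
        noncomm_ring
      rw [dec]
      have n3 : ‖ρ a * (ρ b - (ρ₂ b : B))‖ ≤ (1+δ) * (9*δ) := by
        refine le_trans (norm_mul_le _ _) ?_
        have hr : ‖ρ b - (ρ₂ b : B)‖ ≤ 9*δ := by rw [norm_sub_rev]; exact qb
        exact mul_le_mul hρa1 hr (norm_nonneg _) (by linarith)
      have n4 : ‖(ρ a - (ρ₂ a : B)) * (ρ₂ b : B)‖ ≤ (9*δ) * (1+10*δ) := by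
        refine le_trans (norm_mul_le _ _) ?_
        have hr : ‖ρ a - (ρ₂ a : B)‖ ≤ 9*δ := by rw [norm_sub_rev]; exact qa
        exact mul_le_mul hr hρ₂b1 (norm_nonneg _) (by linarith)
      refine le_trans (norm_add_le _ _) (le_trans (add_le_add (le_trans (norm_add_le _ _)
        (add_le_add (le_trans (norm_add_le _ _) (add_le_add qab d1)) n3)) n4) ?_)
      nlinarith
    · show ‖F (ρ₂ (a+b)) - (F (ρ₂ a) + F (ρ₂ b))‖ ≤ 29*δ
      rw [← map_add, ← map_sub, hFapp, Unitization.norm_inr]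
      show ‖((ρ₂ (a+b) - (ρ₂ a + ρ₂ b) : C) : B)‖ ≤ 29*δ
      have hcoe : ((ρ₂ (a+b) - (ρ₂ a + ρ₂ b) : C) : B)
          = (ρ₂ (a+b) : B) - ((ρ₂ a : B) + (ρ₂ b : B)) := rfl
      rw [hcoe]
      have dec : (ρ₂ (a+b) : B) - ((ρ₂ a : B) + (ρ₂ b : B))
          = ((((ρ₂ (a+b) : B) - ρ (a+b)) + (ρ (a+b) - (ρ a + ρ b)))
            + (ρ a - (ρ₂ a : B))) + (ρ b - (ρ₂ b : B)) := by abel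
      rw [dec]
      have ra : ‖ρ a - (ρ₂ a : B)‖ ≤ 9*δ := by rw [norm_sub_rev]; exact qa
      have rb : ‖ρ b - (ρ₂ b : B)‖ ≤ 9*δ := by rw [norm_sub_rev]; exact qb
      refine le_trans (norm_add_le _ _) (le_trans (add_le_add (le_trans (norm_add_le _ _)
        (add_le_add (le_trans (norm_add_le _ _) (add_le_add qsum d2)) ra)) rb) ?_)
      linarith
    · show ‖F (ρ₂ (star a)) - star (F (ρ₂ a))‖ ≤ 29*δ
      rw [← map_star, ← map_sub, hFapp, Unitization.norm_inr]
      show ‖((ρ₂ (star a) - star (ρ₂ a) : C) : B)‖ ≤ 29*δ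
      have hcoe : ((ρ₂ (star a) - star (ρ₂ a) : C) : B)
          = (ρ₂ (star a) : B) - star ((ρ₂ a : B)) := rfl
      rw [hcoe]
      have dec : (ρ₂ (star a) : B) - star ((ρ₂ a : B))
          = (((ρ₂ (star a) : B) - ρ (star a)) + (ρ (star a) - star (ρ a)))
            + (star (ρ a) - star ((ρ₂ a : B))) := by abel
      rw [dec]
      have rs : ‖star (ρ a) - star ((ρ₂ a : B))‖ ≤ 9*δ := by
        rw [← star_sub, norm_star, norm_sub_rev]
        exact qa
      refine le_trans (norm_add_le _ _) (le_trans (add_le_add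
        (le_trans (norm_add_le _ _) (add_le_add qsa d3)) rs) ?_)
      linarith
    · show ‖F (ρ₂ (c • a)) - c • F (ρ₂ a)‖ ≤ 29*δ
      rw [← map_smul, ← map_sub, hFapp, Unitization.norm_inr]
      show ‖((ρ₂ (c • a) - c • ρ₂ a : C) : B)‖ ≤ 29*δ
      have hcoe : ((ρ₂ (c • a) - c • ρ₂ a : C) : B)
          = (ρ₂ (c • a) : B) - c • ((ρ₂ a : B)) := rfl
      rw [hcoe]
      have dec : (ρ₂ (c • a) : B) - c • ((ρ₂ a : B))
          = (((ρ₂ (c • a) : B) - ρ (c • a)) + (ρ (c • a) - c • ρ a))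
            + c • (ρ a - (ρ₂ a : B)) := by rw [smul_sub]; abel
      rw [dec]
      have rs : ‖c • (ρ a - (ρ₂ a : B))‖ ≤ 9*δ := by
        rw [norm_smul]
        have hr : ‖ρ a - (ρ₂ a : B)‖ ≤ 9*δ := by rw [norm_sub_rev]; exact qa
        nlinarith [norm_nonneg (ρ a - (ρ₂ a : B))]
      refine le_trans (norm_add_le _ _) (le_trans (add_le_add
        (le_trans (norm_add_le _ _) (add_le_add qca d4)) rs) ?_)
      linarith
    · show |‖a‖ - ‖F (ρ₂ a)‖| ≤ 29*δ
      rw [hFapp, Unitization.norm_inr]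
      show |‖a‖ - ‖((ρ₂ a : C) : B)‖| ≤ 29*δ
      have h2 : |‖ρ a‖ - ‖(ρ₂ a : B)‖| ≤ 9*δ := by
        refine le_trans (abs_norm_sub_norm_le _ _) ?_
        rw [norm_sub_rev]
        exact qa
      calc |‖a‖ - ‖(ρ₂ a : B)‖| ≤ |‖a‖ - ‖ρ a‖| + |‖ρ a‖ - ‖(ρ₂ a : B)‖| := abs_sub_le _ _ _
        _ ≤ δ + 9*δ := add_le_add d5 h2
        _ ≤ 29*δ := by linarith
  obtain ⟨ψ, hψ⟩ := hFD A (Unitization ℂ C) ρ₃ (29*δ) hmeasρ₃ hdefect (by linarith)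
  rcases subsingleton_or_nontrivial A with hss | hnt
  · refine ⟨0, fun a ha => ?_⟩
    have ha0 : a = 0 := Subsingleton.elim a 0
    have h00 := (hδ 0 0 (by simp) (by simp) 0 (by simp)).2.1
    rw [add_zero] at h00
    have hz : ‖ρ (0:A)‖ ≤ δ := by
      calc ‖ρ (0:A)‖ = ‖ρ (0:A) - (ρ 0 + ρ 0)‖ := by
            rw [show ρ (0:A) - (ρ 0 + ρ 0) = -ρ 0 by abel, norm_neg]
        _ ≤ δ := h00
    rw [ha0]
    show ‖ρ 0 - 0‖ ≤ _
    rw [sub_zero]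
    nlinarith
  have hone : ‖(1:A)‖ ≤ 1 := le_of_eq CStarRing.norm_one
  have hfst_le : ∀ x : A, ‖x‖ ≤ 1 → ‖(ψ x).fst‖ ≤ K_FD * (29*δ) := by
    intro x hx
    have h1 := hψ x hx
    have hfz : (ρ₃ x).fst = 0 := Unitization.fst_inr ℂ (ρ₂ x)
    have h2 : (ψ x).fst = -((ρ₃ x - ψ x).fst) := by
      have hsub : (ρ₃ x - ψ x).fst = (ρ₃ x).fst - (ψ x).fst := rfl
      rw [hsub, hfz, zero_sub, neg_neg]
    calc ‖(ψ x).fst‖ = ‖(ρ₃ x - ψ x).fst‖ := by rw [h2, norm_neg]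
      _ ≤ ‖ρ₃ x - ψ x‖ := by rw [Unitization.norm_eq_sup]; exact le_sup_left
      _ ≤ K_FD * (29*δ) := h1
  have hfst1 : (ψ 1).fst * (ψ 1).fst = (ψ 1).fst := by
    rw [← Unitization.fst_mul, ← map_mul, one_mul]
  have hfst1z : (ψ 1).fst = 0 := by
    rcases eq_or_ne ((ψ 1).fst) 0 with h0 | hne
    · exact h0
    · exfalso
      have h1 : (ψ 1).fst = 1 := by
        have : (ψ 1).fst * (ψ 1).fst = (ψ 1).fst * 1 := by rw [mul_one, hfst1]
        exact mul_left_cancel₀ hne this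
      have h2 := hfst_le 1 hone
      rw [h1] at h2
      simp only [norm_one] at h2
      nlinarith
  have hfst0 : ∀ x : A, (ψ x).fst = 0 := by
    intro x
    have hx : ψ x = ψ 1 * ψ x := by rw [← map_mul, one_mul]
    rw [hx, Unitization.fst_mul, hfst1z, zero_mul]
  refine ⟨(NonUnitalStarSubalgebraClass.subtype C).comp
    { toFun := (fun x => (ψ x).snd)
      map_smul' := (fun c x => by
        show (ψ (c • x)).snd = c • (ψ x).snd
        rw [map_smul, Unitization.snd_smul])
      map_zero' := by
        show (ψ 0).snd = 0
        rw [map_zero, Unitization.snd_zero]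
      map_add' := (fun x y => by
        show (ψ (x + y)).snd = (ψ x).snd + (ψ y).snd
        rw [map_add, Unitization.snd_add])
      map_mul' := (fun x y => by
        show (ψ (x * y)).snd = (ψ x).snd * (ψ y).snd
        rw [map_mul, Unitization.snd_mul, hfst0, hfst0, zero_smul, zero_smul, zero_add,
          zero_add])
      map_star' := (fun x => by
        show (ψ (star x)).snd = star (ψ x).snd
        rw [map_star, Unitization.snd_star]) }, fun a ha => ?_⟩
  have hψa : ψ a = (((ψ a).snd : C) : Unitization ℂ C) := by
    refine Unitization.ext ?_ ?_
    · rw [hfst0, Unitization.fst_inr]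
    · rw [Unitization.snd_inr]
  have hterm2 : ‖(ρ₂ a : B) - (((ψ a).snd : C) : B)‖ ≤ K_FD * (29*δ) := by
    have h1 := hψ a ha
    rw [hψa] at h1
    have h2 : ρ₃ a - (((ψ a).snd : C) : Unitization ℂ C)
        = ((ρ₂ a - (ψ a).snd : C) : Unitization ℂ C) := by
      rw [Unitization.inr_sub]
      rfl
    rw [h2, Unitization.norm_inr] at h1
    exact h1
  have hterm1 : ‖ρ a - (ρ₂ a : B)‖ ≤ 9*δ := by
    rw [norm_sub_rev]
    exact hclose a (by linarith)
  show ‖ρ a - (((ψ a).snd : C) : B)‖ ≤ (58 * K_FD + 10) * δ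
  calc ‖ρ a - (((ψ a).snd : C) : B)‖
      = ‖(ρ a - (ρ₂ a : B)) + ((ρ₂ a : B) - (((ψ a).snd : C) : B))‖ := by congr 1; abel
    _ ≤ ‖ρ a - (ρ₂ a : B)‖ + ‖(ρ₂ a : B) - (((ψ a).snd : C) : B)‖ := norm_add_le _ _
    _ ≤ 9*δ + K_FD * (29*δ) := add_le_add hterm1 hterm2
    _ ≤ (58 * K_FD + 10) * δ := by nlinarith
end

section
/- Let φ : Q(A) → Q(B) be a *-homomorphism between corona algebras of separable C*-algebras A and B. If φ admits a strict lift (a map L : M(A) → M(B), continuous for the strict topologies on bounded sets, with π∘L = φ∘π), then the graph Γ_φ = {(a,b) ∈ M(A)_1 × M(B)_1 : φ(a + A) = b + B} is a Borel subset of M(A)_1 × M(B)_1, where each unit ball carries the (Polish) strict topology. -/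
open Filter Topology
open scoped MultiplierAlgebra

/-- The strict topology on the multiplier algebra `𝓜(ℂ, B)`: the initial topology with
respect to the maps `T ↦ T b` and `T ↦ b T` into `B` (`b ∈ B`). -/
noncomputable def strictTopM (B : Type*) [NonUnitalCStarAlgebra B] :
    TopologicalSpace 𝓜(ℂ, B) :=
  ⨅ b : B, (TopologicalSpace.induced (fun T : 𝓜(ℂ, B) => T.fst b) inferInstance ⊓
    TopologicalSpace.induced (fun T : 𝓜(ℂ, B) => T.snd b) inferInstance)

section Aux

variable {B : Type*} [NonUnitalCStarAlgebra B]

lemma aux_norm_coe (b : B) : ‖(b : 𝓜(ℂ, B))‖ = ‖b‖ := by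
  rw [← DoubleCentralizer.norm_fst, DoubleCentralizer.coe_fst,
    ContinuousLinearMap.opNorm_mul_apply]

lemma aux_isometry_coe : Isometry (fun b : B => (b : 𝓜(ℂ, B))) := by
  refine Isometry.of_dist_eq fun a b => ?_
  have hsub : ((a - b : B) : 𝓜(ℂ, B)) = (a : 𝓜(ℂ, B)) - (b : 𝓜(ℂ, B)) :=
    map_sub (DoubleCentralizer.coeHom (𝕜 := ℂ) (A := B)) a b
  rw [dist_eq_norm, dist_eq_norm, ← hsub, aux_norm_coe]

lemma aux_mem_range_coe_iff {d : ℕ → B} (hd : DenseRange d) (m : 𝓜(ℂ, B)) :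
    (∃ b : B, m = (b : 𝓜(ℂ, B))) ↔
      ∀ j : ℕ, ∃ n : ℕ, ‖m - (d n : 𝓜(ℂ, B))‖ ≤ 1 / (j + 1) := by
  constructor
  · rintro ⟨b, rfl⟩ j
    obtain ⟨n, hn⟩ := hd.exists_dist_lt b (show (0 : ℝ) < 1 / (j + 1) by positivity)
    refine ⟨n, ?_⟩
    have hsub : ((b - d n : B) : 𝓜(ℂ, B)) = (b : 𝓜(ℂ, B)) - (d n : 𝓜(ℂ, B)) :=
      map_sub (DoubleCentralizer.coeHom (𝕜 := ℂ) (A := B)) b (d n)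
    rw [← hsub, aux_norm_coe, ← dist_eq_norm]
    exact hn.le
  · intro h
    have hcl : IsClosed (Set.range (fun b : B => (b : 𝓜(ℂ, B)))) :=
      aux_isometry_coe.isClosedEmbedding.isClosed_range
    have hmem : m ∈ closure (Set.range (fun b : B => (b : 𝓜(ℂ, B)))) := by
      refine Metric.mem_closure_iff.mpr fun ε hε => ?_
      obtain ⟨j, hj⟩ := exists_nat_one_div_lt hε
      obtain ⟨n, hn⟩ := h j
      exact ⟨(d n : 𝓜(ℂ, B)), ⟨d n, rfl⟩, by
        rw [dist_eq_norm]; exact lt_of_le_of_lt hn hj⟩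
    rw [hcl.closure_eq] at hmem
    obtain ⟨b, hb⟩ := hmem
    exact ⟨b, hb.symm⟩

lemma aux_norm_le_iff {d : ℕ → B} (hd : DenseRange d) (m : 𝓜(ℂ, B)) {ε : ℝ}
    (hε : 0 ≤ ε) : ‖m‖ ≤ ε ↔ ∀ k : ℕ, ‖m.fst (d k)‖ ≤ ε * ‖d k‖ := by
  rw [← DoubleCentralizer.norm_fst]
  constructor
  · intro h k
    exact (m.fst.le_opNorm _).trans (mul_le_mul_of_nonneg_right h (norm_nonneg _))
  · intro h
    refine m.fst.opNorm_le_bound hε fun b => ?_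
    have hsub : Set.range d ⊆ {b : B | ‖m.fst b‖ ≤ ε * ‖b‖} := by
      rintro _ ⟨k, rfl⟩; exact h k
    have hclosed : IsClosed {b : B | ‖m.fst b‖ ≤ ε * ‖b‖} :=
      isClosed_le m.fst.continuous.norm (continuous_const.mul continuous_norm)
    exact closure_minimal hsub hclosed (hd b)

end Aux

/-- Let `A`, `B` be separable C*-algebras and `L : 𝓜(A) → 𝓜(B)` a lift of a
*-homomorphism `φ : Q(A) → Q(B)` between the corona algebras (so `L` is additive,
multiplicative, star-preserving and `ℂ`-homogeneous modulo `B`, and maps differences in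
`A` to differences in `B`), which is strictly continuous on bounded sets.  Then the
graph `Γ_φ = {(a, b) ∈ 𝓜(A)₁ × 𝓜(B)₁ : φ(a + A) = b + B} = {(a, b) : L a - b ∈ B}`
is a Borel subset of the product of the unit balls with their (Polish) strict
topologies. -/
theorem graph_borel_of_strict_lift
    (A B : Type*) [NonUnitalCStarAlgebra A] [NonUnitalCStarAlgebra B]
    [TopologicalSpace.SeparableSpace A] [TopologicalSpace.SeparableSpace B]
    (L : 𝓜(ℂ, A) → 𝓜(ℂ, B))
    (hcong : ∀ x y : 𝓜(ℂ, A), (∃ a : A, x - y = (a : 𝓜(ℂ, A))) →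
      ∃ b : B, L x - L y = (b : 𝓜(ℂ, B)))
    (hadd : ∀ x y : 𝓜(ℂ, A), ∃ b : B, L (x + y) - (L x + L y) = (b : 𝓜(ℂ, B)))
    (hmul : ∀ x y : 𝓜(ℂ, A), ∃ b : B, L (x * y) - L x * L y = (b : 𝓜(ℂ, B)))
    (hstar : ∀ x : 𝓜(ℂ, A), ∃ b : B, L (star x) - star (L x) = (b : 𝓜(ℂ, B)))
    (hsmul : ∀ (c : ℂ) (x : 𝓜(ℂ, A)), ∃ b : B, L (c • x) - c • L x = (b : 𝓜(ℂ, B)))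
    (hstrict : ∀ r : ℝ, 0 < r →
      @ContinuousOn _ _ (strictTopM A) (strictTopM B) L {x : 𝓜(ℂ, A) | ‖x‖ ≤ r}) :
    @MeasurableSet _
      (@borel _
        (@instTopologicalSpaceProd {x : 𝓜(ℂ, A) // ‖x‖ ≤ 1} {y : 𝓜(ℂ, B) // ‖y‖ ≤ 1}
          (TopologicalSpace.induced Subtype.val (strictTopM A))
          (TopologicalSpace.induced Subtype.val (strictTopM B))))
      {q : {x : 𝓜(ℂ, A) // ‖x‖ ≤ 1} × {y : 𝓜(ℂ, B) // ‖y‖ ≤ 1} |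
        ∃ b : B, L q.1.1 - q.2.1 = (b : 𝓜(ℂ, B))} := by
  classical
  haveI : Nonempty B := ⟨0⟩
  obtain ⟨d, hd⟩ : ∃ d : ℕ → B, DenseRange d :=
    ⟨TopologicalSpace.denseSeq B, TopologicalSpace.denseRange_denseSeq B⟩
  letI tMA : TopologicalSpace 𝓜(ℂ, A) := strictTopM A
  letI tMB : TopologicalSpace 𝓜(ℂ, B) := strictTopM B
  letI : MeasurableSpace ({x : 𝓜(ℂ, A) // ‖x‖ ≤ 1} × {y : 𝓜(ℂ, B) // ‖y‖ ≤ 1}) :=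
    borel _
  haveI : BorelSpace ({x : 𝓜(ℂ, A) // ‖x‖ ≤ 1} × {y : 𝓜(ℂ, B) // ‖y‖ ≤ 1}) := ⟨rfl⟩
  -- evaluation maps are strictly continuous
  have hev : ∀ k : ℕ, Continuous (fun m : 𝓜(ℂ, B) => m.fst (d k)) := by
    intro k
    refine continuous_iff_le_induced.mpr ?_
    exact le_trans (iInf_le _ (d k)) inf_le_left
  -- `L` restricted to the unit ball is strictly continuous
  have hL1 : Continuous (fun x : {x : 𝓜(ℂ, A) // ‖x‖ ≤ 1} => L x.1) := by
    have h := hstrict 1 one_pos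
    exact h.comp_continuous continuous_subtype_val fun x => x.2
  -- the functions defining the graph are continuous
  have hg : ∀ n k : ℕ,
      Continuous (fun q : {x : 𝓜(ℂ, A) // ‖x‖ ≤ 1} × {y : 𝓜(ℂ, B) // ‖y‖ ≤ 1} =>
        ‖(L q.1.1 - q.2.1 - ((d n : B) : 𝓜(ℂ, B))).fst (d k)‖) := by
    intro n k
    have heq : (fun q : {x : 𝓜(ℂ, A) // ‖x‖ ≤ 1} × {y : 𝓜(ℂ, B) // ‖y‖ ≤ 1} =>
        ‖(L q.1.1 - q.2.1 - ((d n : B) : 𝓜(ℂ, B))).fst (d k)‖) =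
        fun q => ‖(L q.1.1).fst (d k) - (q.2.1 : 𝓜(ℂ, B)).fst (d k) -
          ((d n : B) : 𝓜(ℂ, B)).fst (d k)‖ := by
      funext q
      rw [DoubleCentralizer.sub_fst, DoubleCentralizer.sub_fst,
        ContinuousLinearMap.sub_apply, ContinuousLinearMap.sub_apply]
    rw [heq]
    have h1 : Continuous (fun q : {x : 𝓜(ℂ, A) // ‖x‖ ≤ 1} × {y : 𝓜(ℂ, B) // ‖y‖ ≤ 1} =>
        (L q.1.1).fst (d k)) := (hev k).comp (hL1.comp continuous_fst)
    have h2 : Continuous (fun q : {x : 𝓜(ℂ, A) // ‖x‖ ≤ 1} × {y : 𝓜(ℂ, B) // ‖y‖ ≤ 1} =>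
        (q.2.1 : 𝓜(ℂ, B)).fst (d k)) :=
      (hev k).comp (continuous_subtype_val.comp continuous_snd)
    exact ((h1.sub h2).sub continuous_const).norm
  -- rewrite the graph as a countable combination of closed sets
  have hset : {q : {x : 𝓜(ℂ, A) // ‖x‖ ≤ 1} × {y : 𝓜(ℂ, B) // ‖y‖ ≤ 1} |
        ∃ b : B, L q.1.1 - q.2.1 = (b : 𝓜(ℂ, B))} =
      ⋂ j : ℕ, ⋃ n : ℕ, ⋂ k : ℕ,
        {q : {x : 𝓜(ℂ, A) // ‖x‖ ≤ 1} × {y : 𝓜(ℂ, B) // ‖y‖ ≤ 1} |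
          ‖(L q.1.1 - q.2.1 - ((d n : B) : 𝓜(ℂ, B))).fst (d k)‖ ≤
            (1 / (j + 1)) * ‖d k‖} := by
    ext q
    simp only [Set.mem_setOf_eq, Set.mem_iInter, Set.mem_iUnion]
    rw [aux_mem_range_coe_iff hd]
    refine forall_congr' fun j => exists_congr fun n => ?_
    exact aux_norm_le_iff hd _ (by positivity)
  rw [hset]
  exact MeasurableSet.iInter fun j => MeasurableSet.iUnion fun n =>
    MeasurableSet.iInter fun k =>
      (isClosed_le (hg n k) continuous_const).measurableSet
end
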